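/- For every integer t ≥ 0 and every odd positive integer p, the forest consisting of p pairwise disjoint copies of the star K_{1,t} admits a super edge-magic labeling. -/

import Mathlib

/-- An edge-magic labeling of an `n`-vertex graph `G` with `m` edges and magic constant `k`:
a bijection `f : V ∪ E → {1,…,n+m}` with `f(u)+f(v)+f(uv) = k` for every edge `uv`. -/
def IsEdgeMagicLabeling {V : Type*} [Fintype V] (G : SimpleGraph V)
    (f : V ⊕ ↥G.edgeSet → ℕ) (k : ℕ) : Prop :=
  Set.BijOn f Set.univ (Set.Icc 1 (Fintype.card V + G.edgeSet.ncard)) ∧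
  ∀ (u v : V) (h : G.Adj u v),
    f (Sum.inl u) + f (Sum.inl v) + f (Sum.inr ⟨s(u, v), (G.mem_edgeSet).mpr h⟩) = k

/-- A super edge-magic labeling: an edge-magic labeling whose vertex labels are
exactly `{1,…,n}`. -/
def IsSuperEdgeMagicLabeling {V : Type*} [Fintype V] (G : SimpleGraph V)
    (f : V ⊕ ↥G.edgeSet → ℕ) : Prop :=
  (∃ k, IsEdgeMagicLabeling G f k) ∧
  Set.range (fun v : V => f (Sum.inl v)) = Set.Icc 1 (Fintype.card V)

/-- A graph is super edge-magic if it admits a super edge-magic labeling. -/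
def SuperEdgeMagic {V : Type*} [Fintype V] (G : SimpleGraph V) : Prop :=
  ∃ f, IsSuperEdgeMagicLabeling G f

/-- The constellation consisting of `p` pairwise disjoint stars, the `i`-th having `m i`
edges: vertex `⟨i, 0⟩` is the center of the `i`-th star and `⟨i, 1⟩, …, ⟨i, m i⟩` are its
leaves. -/
def constellationGraph (p : ℕ) (m : Fin p → ℕ) :
    SimpleGraph (Σ i : Fin p, Fin (m i + 1)) where
  Adj a b := a.1 = b.1 ∧ ((a.2.val = 0 ∧ b.2.val ≠ 0) ∨ (a.2.val ≠ 0 ∧ b.2.val = 0))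
  symm := by constructor; rintro ⟨i, x⟩ ⟨j, y⟩ ⟨h1, h2⟩; exact ⟨h1.symm, by tauto⟩
  loopless := by constructor; rintro ⟨i, x⟩ ⟨-, h⟩; tauto

namespace SEMaux

abbrev Vtx (q t : ℕ) := Σ _ : Fin (2*q+1), Fin (t+1)

/-- the vertex labeling -/
def labF (q t : ℕ) (x : Vtx q t) : ℕ :=
  if x.2.val = 0 then x.1.val + 1
  else (2*q+1) * x.2.val + (if x.1.val ≤ q then q + 1 + x.1.val else x.1.val - q)

lemma labF_pos (q t : ℕ) (x : Vtx q t) : 1 ≤ labF q t x := by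
  unfold labF
  split
  · omega
  · split <;> omega

lemma labF_le (q t : ℕ) (x : Vtx q t) : labF q t x ≤ (2*q+1) * (t+1) := by
  have hi : x.1.val < 2*q+1 := x.1.isLt
  have hj : x.2.val < t+1 := x.2.isLt
  have h1 : (2*q+1) * x.2.val ≤ (2*q+1) * t := Nat.mul_le_mul_left _ (by omega)
  have h2 : (2*q+1) * (t+1) = (2*q+1)*t + (2*q+1) := by ring
  unfold labF
  split
  · omega
  · split <;> omega

lemma labF_inj (q t : ℕ) : Function.Injective (labF q t) := by
  rintro ⟨i, j⟩ ⟨i', j'⟩ h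
  have hi : i.val < 2*q+1 := i.isLt
  have hi' : i'.val < 2*q+1 := i'.isLt
  have hj : j.val < t+1 := j.isLt
  have hj' : j'.val < t+1 := j'.isLt
  unfold labF at h
  simp only at h
  have hij : i = i' ∧ j = j' := by
    by_cases h0 : j.val = 0 <;> by_cases h0' : j'.val = 0
    · rw [if_pos h0, if_pos h0'] at h
      refine ⟨Fin.ext (by omega), Fin.ext (by omega)⟩
    · rw [if_pos h0, if_neg h0'] at h
      exfalso
      have : (2*q+1) * 1 ≤ (2*q+1) * j'.val := Nat.mul_le_mul_left _ (by omega)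
      split at h <;> omega
    · rw [if_neg h0, if_pos h0'] at h
      exfalso
      have : (2*q+1) * 1 ≤ (2*q+1) * j.val := Nat.mul_le_mul_left _ (by omega)
      split at h <;> omega
    · rw [if_neg h0, if_neg h0'] at h
      -- both leaves
      have hjj : j.val = j'.val ∧
          (if i.val ≤ q then q + 1 + i.val else i.val - q)
            = (if i'.val ≤ q then q + 1 + i'.val else i'.val - q) := by
        rcases Nat.lt_trichotomy j.val j'.val with hlt | heq | hlt
        · exfalso
          have h5 : (2*q+1) * (j.val+1) ≤ (2*q+1) * j'.val := Nat.mul_le_mul_left _ hlt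
          rw [Nat.mul_succ] at h5
          split at h <;> split at h <;> omega
        · constructor
          · exact heq
          · rw [heq] at h; omega
        · exfalso
          have h5 : (2*q+1) * (j'.val+1) ≤ (2*q+1) * j.val := Nat.mul_le_mul_left _ hlt
          rw [Nat.mul_succ] at h5
          split at h <;> split at h <;> omega
      obtain ⟨hjj1, hjj2⟩ := hjj
      refine ⟨Fin.ext ?_, Fin.ext hjj1⟩
      split at hjj2 <;> split at hjj2 <;> omega
  obtain ⟨h1, h2⟩ := hij
  subst h1; subst h2; rfl

/-- the canonical edge enumeration -/
def psiF (q t : ℕ) (x : Fin (2*q+1) × Fin t) : Sym2 (Vtx q t) :=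
  s(⟨x.1, 0⟩, ⟨x.1, x.2.succ⟩)

lemma psiF_mem (q t : ℕ) (x : Fin (2*q+1) × Fin t) :
    psiF q t x ∈ (constellationGraph (2*q+1) (fun _ => t)).edgeSet := by
  unfold psiF
  rw [SimpleGraph.mem_edgeSet]
  exact ⟨rfl, Or.inl ⟨rfl, by simp [Fin.val_succ]⟩⟩

lemma edge_repr (q t : ℕ) :
    ∀ e ∈ (constellationGraph (2*q+1) (fun _ => t)).edgeSet, ∃ x, e = psiF q t x := by
  intro e he
  induction e using Sym2.ind with
  | _ a b =>
    rw [SimpleGraph.mem_edgeSet] at he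
    obtain ⟨ia, ja⟩ := a
    obtain ⟨ib, jb⟩ := b
    obtain ⟨h1, h2⟩ := he
    have h1' : ia = ib := h1
    subst h1'
    have hja : ja.val < t + 1 := ja.isLt
    have hjb : jb.val < t + 1 := jb.isLt
    rcases h2 with ⟨ha, hb⟩ | ⟨ha, hb⟩
    · have ha' : ja.val = 0 := ha
      have hb' : jb.val ≠ 0 := hb
      refine ⟨(ia, ⟨jb.val - 1, by omega⟩), ?_⟩
      unfold psiF
      have e1 : ja = 0 := Fin.ext ha'
      have e2 : jb = Fin.succ ⟨jb.val - 1, by omega⟩ := Fin.ext (by simp [Fin.val_succ]; omega)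
      rw [e1, ← e2]
    · have ha' : ja.val ≠ 0 := ha
      have hb' : jb.val = 0 := hb
      refine ⟨(ia, ⟨ja.val - 1, by omega⟩), ?_⟩
      unfold psiF
      have e1 : jb = 0 := Fin.ext hb'
      have e2 : ja = Fin.succ ⟨ja.val - 1, by omega⟩ := Fin.ext (by simp [Fin.val_succ]; omega)
      rw [e1, ← e2, Sym2.eq_swap]

lemma psiF_inj (q t : ℕ) : Function.Injective (psiF q t) := by
  rintro ⟨i, j⟩ ⟨i', j'⟩ h
  unfold psiF at h
  rw [Sym2.eq_iff] at h
  rcases h with ⟨h1, h2⟩ | ⟨h1, h2⟩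
  · have hii : i = i' := congrArg Sigma.fst h1
    subst hii
    have : (⟨i, j.succ⟩ : Vtx q t) = ⟨i, j'.succ⟩ := h2
    have hj : j.succ = j'.succ := by
      have := congrArg (fun z : Vtx q t => z.2.val) this
      simp at this
      exact Fin.ext (by simpa [Fin.val_succ] using this)
    rw [Fin.succ_inj] at hj
    rw [hj]
  · exfalso
    have := congrArg (fun z : Vtx q t => z.2.val) h1
    simp [Fin.val_succ] at this

lemma edgeSet_eq (q t : ℕ) :
    (constellationGraph (2*q+1) (fun _ => t)).edgeSet = Set.range (psiF q t) := by
  apply Set.Subset.antisymm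
  · intro e he
    obtain ⟨x, hx⟩ := edge_repr q t e he
    exact ⟨x, hx.symm⟩
  · rintro _ ⟨x, rfl⟩
    exact psiF_mem q t x

lemma ncard_edgeSet (q t : ℕ) :
    (constellationGraph (2*q+1) (fun _ => t)).edgeSet.ncard = (2*q+1) * t := by
  rw [edgeSet_eq, ← Set.image_univ, Set.ncard_image_of_injective _ (psiF_inj q t),
    Set.ncard_univ, Nat.card_eq_fintype_card]
  simp

/-- edge-sum function -/
def SE (q t : ℕ) : Sym2 (Vtx q t) → ℕ :=
  Sym2.lift ⟨fun a b => labF q t a + labF q t b, fun a b => by ring⟩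

lemma SE_mk (q t : ℕ) (a b : Vtx q t) : SE q t s(a, b) = labF q t a + labF q t b := rfl

lemma SE_psiF (q t : ℕ) (x : Fin (2*q+1) × Fin t) :
    SE q t (psiF q t x) =
      (2*q+1) * (x.2.val + 1) + (x.1.val + 1 + (if x.1.val ≤ q then q + 1 + x.1.val else x.1.val - q)) := by
  obtain ⟨i, j⟩ := x
  rw [psiF, SE_mk]
  unfold labF
  simp only [Fin.val_succ]
  have h0 : ((0 : Fin (t+1))).val = 0 := rfl
  rw [if_pos h0, if_neg (by omega : ¬ (j.val + 1 = 0))]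
  generalize (2*q+1) * (j.val + 1) = A
  split <;> omega

/-- magic constant -/
def KC (q t : ℕ) : ℕ := 2*((2*q+1)*t) + 2*(2*q+1) + q + 2

/-- the full labeling -/
def fF (q t : ℕ) :
    Vtx q t ⊕ ↥(constellationGraph (2*q+1) (fun _ => t)).edgeSet → ℕ :=
  Sum.elim (labF q t) (fun e => KC q t - SE q t e.val)

lemma edge_val_bounds (q t : ℕ)
    (e : ↥(constellationGraph (2*q+1) (fun _ => t)).edgeSet) :
    (2*q+1)*(t+1) + 1 ≤ KC q t - SE q t e.val ∧
      KC q t - SE q t e.val ≤ (2*q+1)*(t+1) + (2*q+1)*t := by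
  obtain ⟨x, hx⟩ := edge_repr q t e.val e.prop
  rw [hx, SE_psiF]
  have h1 : x.1.val < 2*q+1 := x.1.isLt
  have h2 : x.2.val < t := x.2.isLt
  have h3 : (2*q+1)*1 ≤ (2*q+1)*(x.2.val+1) := Nat.mul_le_mul_left _ (by omega)
  have h4 : (2*q+1)*(x.2.val+1) ≤ (2*q+1)*t := Nat.mul_le_mul_left _ (by omega)
  have h6 : (2*q+1)*(t+1) = (2*q+1)*t + (2*q+1) := by ring
  unfold KC
  split <;> omega

lemma SE_psiF_inj (q t : ℕ) :
    ∀ x y : Fin (2*q+1) × Fin t, SE q t (psiF q t x) = SE q t (psiF q t y) → x = y := by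
  rintro ⟨i, j⟩ ⟨i', j'⟩ h
  rw [SE_psiF, SE_psiF] at h
  simp only at h
  have h1 : i.val < 2*q+1 := i.isLt
  have h1' : i'.val < 2*q+1 := i'.isLt
  have key : j.val = j'.val ∧
      (i.val + 1 + (if i.val ≤ q then q + 1 + i.val else i.val - q))
        = (i'.val + 1 + (if i'.val ≤ q then q + 1 + i'.val else i'.val - q)) := by
    rcases Nat.lt_trichotomy j.val j'.val with hlt | heq | hlt
    · exfalso
      have h5 : (2*q+1)*(j.val+1+1) ≤ (2*q+1)*(j'.val+1) := Nat.mul_le_mul_left _ (by omega)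
      rw [Nat.mul_succ] at h5
      split at h <;> split at h <;> omega
    · refine ⟨heq, ?_⟩
      rw [heq] at h
      omega
    · exfalso
      have h5 : (2*q+1)*(j'.val+1+1) ≤ (2*q+1)*(j.val+1) := Nat.mul_le_mul_left _ (by omega)
      rw [Nat.mul_succ] at h5
      split at h <;> split at h <;> omega
  obtain ⟨k1, k2⟩ := key
  have hii : i.val = i'.val := by
    split at k2 <;> split at k2 <;> omega
  have : i = i' := Fin.ext hii
  have : j = j' := Fin.ext k1
  simp_all

lemma fF_inj (q t : ℕ) : Function.Injective (fF q t) := by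
  rintro (a | e) (b | e') h
  · simp only [fF, Sum.elim_inl] at h
    exact congrArg Sum.inl (labF_inj q t h)
  · exfalso
    have hb := edge_val_bounds q t e'
    have ha := labF_le q t a
    simp only [fF, Sum.elim_inl, Sum.elim_inr] at h
    omega
  · exfalso
    have hb := edge_val_bounds q t e
    have ha := labF_le q t b
    simp only [fF, Sum.elim_inl, Sum.elim_inr] at h
    omega
  · simp only [fF, Sum.elim_inr] at h
    have hb := edge_val_bounds q t e
    have hb' := edge_val_bounds q t e'
    have hSE : SE q t e.val = SE q t e'.val := by omega
    obtain ⟨x, hx⟩ := edge_repr q t e.val e.prop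
    obtain ⟨y, hy⟩ := edge_repr q t e'.val e'.prop
    rw [hx, hy] at hSE
    have hxy := SE_psiF_inj q t x y hSE
    subst hxy
    exact congrArg Sum.inr (Subtype.ext (hx.trans hy.symm))

lemma image_eq_Icc {α : Type*} (f : α → ℕ) (hinj : Function.Injective f) (N : ℕ)
    (hcard : Nat.card α = N) (hmem : ∀ a, f a ∈ Set.Icc 1 N) :
    Set.range f = Set.Icc 1 N := by
  refine Set.eq_of_subset_of_ncard_le (by rintro _ ⟨a, rfl⟩; exact hmem a) ?_
    (Set.finite_Icc 1 N)
  rw [← Set.image_univ, Set.ncard_image_of_injective _ hinj, Set.ncard_univ, hcard,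
    ← Finset.coe_Icc, Set.ncard_coe_finset, Nat.card_Icc]
  omega

theorem aux_main (t q : ℕ) :
    SuperEdgeMagic (constellationGraph (2*q+1) (fun _ => t)) := by
  classical
  have hcardV : Fintype.card (Vtx q t) = (2*q+1)*(t+1) := by
    simp [Fintype.card_sigma]
  have hNcard :
      Nat.card (Vtx q t ⊕ ↥(constellationGraph (2*q+1) (fun _ => t)).edgeSet)
        = (2*q+1)*(t+1) + (2*q+1)*t := by
    rw [Nat.card_sum]
    congr 1
    · rw [Nat.card_eq_fintype_card, hcardV]
    · rw [Nat.card_coe_set_eq, ncard_edgeSet]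
  have hmem : ∀ x, fF q t x ∈ Set.Icc 1 ((2*q+1)*(t+1) + (2*q+1)*t) := by
    rintro (a | e)
    · have := labF_pos q t a
      have := labF_le q t a
      simp only [fF, Sum.elim_inl, Set.mem_Icc]
      omega
    · have := edge_val_bounds q t e
      simp only [fF, Sum.elim_inr, Set.mem_Icc]
      omega
  have hrange : Set.range (fF q t) = Set.Icc 1 ((2*q+1)*(t+1) + (2*q+1)*t) :=
    image_eq_Icc _ (fF_inj q t) _ hNcard hmem
  have hIccN : Fintype.card (Vtx q t)
      + (constellationGraph (2*q+1) (fun _ => t)).edgeSet.ncard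
      = (2*q+1)*(t+1) + (2*q+1)*t := by
    rw [hcardV, ncard_edgeSet]
  refine ⟨fF q t, ⟨KC q t, ?_, ?_⟩, ?_⟩
  · -- BijOn
    rw [hIccN]
    refine ⟨fun x _ => hmem x, (fF_inj q t).injOn, fun y hy => ?_⟩
    rw [Set.image_univ, hrange]
    exact hy
  · -- magic sum
    intro u v hadj
    have hu1 := labF_le q t u
    have hv1 := labF_le q t v
    have h6 : (2*q+1)*(t+1) = (2*q+1)*t + (2*q+1) := by ring
    simp only [fF, Sum.elim_inl, Sum.elim_inr, SE_mk]
    unfold KC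
    omega
  · -- vertex labels
    have hfun : (fun v => fF q t (Sum.inl v)) = labF q t := rfl
    rw [hfun, hcardV]
    exact image_eq_Icc _ (labF_inj q t) _
      (by rw [Nat.card_eq_fintype_card, hcardV])
      (fun a => Set.mem_Icc.mpr ⟨labF_pos q t a, labF_le q t a⟩)

end SEMaux

/-- For every integer `t ≥ 0` and every odd positive integer `p`, the
forest consisting of `p` pairwise disjoint copies of the star `K_{1,t}` admits a super
edge-magic labeling. -/
theorem super_edge_magic_copies_of_star (t p : ℕ) (hp : Odd p) :
    SuperEdgeMagic (constellationGraph p (fun _ => t)) := by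
  obtain ⟨q, rfl⟩ := hp
  exact SEMaux.aux_main t q
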